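/- Let Ω be a convex domain in ℝⁿ. Then for every x ∈ Ω and all real numbers R > r > 0, vol(B(x, r) ∩ Ω) / vol(B(x, R) ∩ Ω) ≥ (r/R)ⁿ; equivalently, Rⁿ · vol(B(x, r) ∩ Ω) ≥ rⁿ · vol(B(x, R) ∩ Ω). (Bishop–Gromov inequality for convex domains in Euclidean space.) -/

import Mathlib

open MeasureTheory Metric Pointwise

/-- **Bishop–Gromov inequality for convex domains in `ℝⁿ`.** For a convex domain `Ω ⊆ ℝⁿ`,
any `x ∈ Ω` and any `R > r > 0`,
`vol(B(x,r) ∩ Ω) / vol(B(x,R) ∩ Ω) ≥ (r/R)ⁿ`, i.e.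
`Rⁿ · vol(B(x,r) ∩ Ω) ≥ rⁿ · vol(B(x,R) ∩ Ω)`. -/
theorem bishop_gromov_convex {n : ℕ} (Ω : Set (EuclideanSpace ℝ (Fin n)))
    (hΩopen : IsOpen Ω) (hΩconv : Convex ℝ Ω) (hΩne : Ω.Nonempty)
    (x : EuclideanSpace ℝ (Fin n)) (hx : x ∈ Ω) (r R : ℝ) (hr : 0 < r) (hrR : r < R) :
    ENNReal.ofReal (r ^ n) * volume (ball x R ∩ Ω) ≤
      ENNReal.ofReal (R ^ n) * volume (ball x r ∩ Ω) := by
  have hR : 0 < R := hr.trans hrR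
  set c : ℝ := r / R with hc
  have hc0 : 0 < c := div_pos hr hR
  have hc1 : c < 1 := (div_lt_one hR).mpr hrR
  set s : Set (EuclideanSpace ℝ (Fin n)) := ball x R ∩ Ω with hs
  have hsub : (fun y => c • y + (1 - c) • x) '' s ⊆ ball x r ∩ Ω := by
    rintro _ ⟨y, ⟨hyB, hyΩ⟩, rfl⟩
    refine ⟨?_, hΩconv hyΩ hx hc0.le (by linarith) (by ring)⟩
    rw [mem_ball] at hyB ⊢
    have h1 : c • y + (1 - c) • x - x = c • (y - x) := by
      rw [smul_sub, sub_smul, one_smul]; abel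
    rw [dist_eq_norm, h1, norm_smul, Real.norm_eq_abs, abs_of_pos hc0]
    have h2 : ‖y - x‖ < R := by rwa [← dist_eq_norm]
    calc c * ‖y - x‖ < c * R := by
          exact (mul_lt_mul_iff_right₀ hc0).mpr h2
      _ = r := by rw [hc, div_mul_cancel₀ r hR.ne']
  have himg : (fun y => c • y + (1 - c) • x) '' s = (1 - c) • x +ᵥ c • s := by
    rw [show (fun y : EuclideanSpace ℝ (Fin n) => c • y + (1 - c) • x)
        = (fun z => (1 - c) • x +ᵥ z) ∘ (fun y => c • y) by
      funext y; simp [add_comm]]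
    rw [Set.image_comp, Set.image_smul, Set.image_vadd]
  have hmeas : volume ((fun y => c • y + (1 - c) • x) '' s)
      = ENNReal.ofReal (c ^ n) * volume s := by
    rw [himg, measure_vadd, Measure.addHaar_smul_of_nonneg volume hc0.le,
      finrank_euclideanSpace_fin]
  have key : ENNReal.ofReal (c ^ n) * volume s ≤ volume (ball x r ∩ Ω) := by
    rw [← hmeas]; exact measure_mono hsub
  calc ENNReal.ofReal (r ^ n) * volume s
      = ENNReal.ofReal (R ^ n) * (ENNReal.ofReal (c ^ n) * volume s) := by
        rw [← mul_assoc, ← ENNReal.ofReal_mul (by positivity)]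
        congr 2
        rw [hc, div_pow, mul_div_cancel₀ _ (pow_ne_zero n hR.ne')]
    _ ≤ ENNReal.ofReal (R ^ n) * volume (ball x r ∩ Ω) :=
        mul_le_mul_right key _
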